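/- For every n ≥ 4 with n ≡ 1 (mod 3), the decycling number of the square of the n-cycle equals (n+2)/3: ∇(Cₙ²) = (n−1)/3 + 1 = ⌈(n+1)/3⌉. -/

import Mathlib

open SimpleGraph

/-- `S` is a decycling set of `G` if the subgraph of `G` induced on the complement of `S`
is acyclic. -/
def SimpleGraph.IsDecyclingSet {V : Type*} (G : SimpleGraph V) (S : Set V) : Prop :=
  (G.induce Sᶜ).IsAcyclic

/-- The decycling number `∇(G)` of `G`: the minimum cardinality of a decycling set of `G`. -/
noncomputable def SimpleGraph.decyclingNumber {V : Type*} (G : SimpleGraph V) : ℕ :=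
  sInf {k | ∃ S : Set V, G.IsDecyclingSet S ∧ S.ncard = k}

/-- The square `Cₙ²` of the `n`-cycle: vertex set `ZMod n`, with `i` adjacent to `j` iff
`i ≠ j` and `i - j ≡ ±1` or `±2 (mod n)`. -/
def cycleSquare (n : ℕ) : SimpleGraph (ZMod n) where
  Adj i j := i ≠ j ∧ (i - j = 1 ∨ j - i = 1 ∨ i - j = 2 ∨ j - i = 2)
  symm := by constructor; intro i j ⟨h, hd⟩; exact ⟨h.symm, by tauto⟩
  loopless := by constructor; intro i ⟨h, _⟩; exact h rfl

/-- Every walk from `b` to `u` with `b ≠ u` ends with an edge into `u`. -/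
private lemma exists_last_edge' {V : Type*} {G : SimpleGraph V} :
    ∀ {b u : V} (p : G.Walk b u), b ≠ u →
      ∃ d, G.Adj d u ∧ s(d, u) ∈ p.edges ∧ d ∈ p.support := by
  intro b u p
  induction p with
  | nil => intro h; exact absurd rfl h
  | @cons b c u h q ih =>
    intro _
    by_cases hcu : c = u
    · subst hcu
      exact ⟨b, h, by simp, by simp⟩
    · obtain ⟨d, hd, he, hs⟩ := ih hcu
      exact ⟨d, hd, by simp [he], by simp [hs]⟩

/-- A cycle cannot start at a vertex maximizing an injective "height" function whose
values change by exactly 1 along edges. -/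
private lemma no_cycle_at_max' {V : Type*} {G : SimpleGraph V} (f : V → ℕ)
    (hinj : Function.Injective f)
    (hadj : ∀ v w, G.Adj v w → f w + 1 = f v ∨ f v + 1 = f w)
    {u : V} (c : G.Walk u u) (hc : c.IsCycle)
    (hmax : ∀ x ∈ c.support, f x ≤ f u) : False := by
  cases c with
  | nil => exact hc.ne_nil rfl
  | @cons _ b _ h1 p =>
    obtain ⟨d, hd, he, hs⟩ := exists_last_edge' p h1.ne'
    have hnodup : (Walk.cons h1 p).edges.Nodup := hc.isCircuit.isTrail.edges_nodup
    rw [Walk.edges_cons, List.nodup_cons] at hnodup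
    have hb : f b ≤ f u := hmax b (by simp [p.start_mem_support])
    have hdle : f d ≤ f u := hmax d (by simp [hs])
    have hbne : f b ≠ f u := fun h => h1.ne' (hinj h)
    have hdne : f d ≠ f u := fun h => hd.ne (hinj h)
    have h2 := hadj u b h1
    have h3 := hadj d u hd
    have : f b = f d := by omega
    have : b = d := hinj this
    subst this
    exact hnodup.1 (by rwa [Sym2.eq_swap] at he)

/-- A graph equipped with an injective height function whose values change by exactly 1
along edges is acyclic. -/
private lemma acyclic_of_height' {V : Type*} {G : SimpleGraph V} (f : V → ℕ)
    (hinj : Function.Injective f)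
    (hadj : ∀ v w, G.Adj v w → f w + 1 = f v ∨ f v + 1 = f w) : G.IsAcyclic := by
  classical
  intro v c hc
  obtain ⟨u, hu, hmaxv⟩ := c.support.toFinset.exists_max_image f
    ⟨v, List.mem_toFinset.mpr c.start_mem_support⟩
  have hu' : u ∈ c.support := List.mem_toFinset.mp hu
  refine no_cycle_at_max' f hinj hadj (c.rotate u hu') (hc.rotate hu') ?_
  intro x hx
  rw [Walk.rotate, Walk.support_append] at hx
  rcases List.mem_append.mp hx with h' | h'
  · exact hmaxv x (List.mem_toFinset.mpr (c.support_dropUntil_subset _ h'))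
  · exact hmaxv x (List.mem_toFinset.mpr
      (c.support_takeUntil_subset _ (List.mem_of_mem_tail h')))

/-- Any three consecutive vertices form a triangle, so a decycling set meets every window
of three consecutive vertices. -/
private lemma window_hit' (m : ℕ) (hm : 1 ≤ m) (T : Set (ZMod (3*m+1)))
    (hT : (cycleSquare (3*m+1)).IsDecyclingSet T) (i : ZMod (3*m+1)) :
    i ∈ T ∨ i + 1 ∈ T ∨ i + 2 ∈ T := by
  haveI : NeZero (3*m+1) := ⟨by omega⟩
  by_contra hcon
  push_neg at hcon
  obtain ⟨h0, h1, h2⟩ := hcon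
  have h1ne : (1 : ZMod (3*m+1)) ≠ 0 := by
    have : ((1:ℕ) : ZMod (3*m+1)) ≠ 0 := by
      rw [Ne, ZMod.natCast_eq_zero_iff]
      intro h; have := Nat.le_of_dvd (by norm_num) h; omega
    simpa using this
  have h2ne : (2 : ZMod (3*m+1)) ≠ 0 := by
    have : ((2:ℕ) : ZMod (3*m+1)) ≠ 0 := by
      rw [Ne, ZMod.natCast_eq_zero_iff]
      intro h; have := Nat.le_of_dvd (by norm_num) h; omega
    simpa using this
  have e01 : i ≠ i + 1 := by
    intro h; exact h1ne (by linear_combination -h)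
  have e02 : i ≠ i + 2 := by
    intro h; exact h2ne (by linear_combination -h)
  have e12 : i + 1 ≠ i + 2 := by
    intro h; exact h1ne (by linear_combination -h)
  have hab : (cycleSquare (3*m+1)).Adj i (i+1) :=
    ⟨e01, by right; left; ring⟩
  have hbc : (cycleSquare (3*m+1)).Adj (i+1) (i+2) :=
    ⟨e12, by right; left; ring⟩
  have hca : (cycleSquare (3*m+1)).Adj (i+2) i :=
    ⟨e02.symm, by right; right; left; ring⟩
  have f01 : (0 : ZMod (3*m+1)) ≠ 1 := fun h => h1ne h.symm
  have f02 : (0 : ZMod (3*m+1)) ≠ 2 := fun h => h2ne h.symm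
  have f12 : (1 : ZMod (3*m+1)) ≠ 2 := fun h => h1ne (by linear_combination -h)
  let a : ↥Tᶜ := ⟨i, h0⟩
  let b : ↥Tᶜ := ⟨i+1, h1⟩
  let cc : ↥Tᶜ := ⟨i+2, h2⟩
  have hab' : ((cycleSquare (3*m+1)).induce Tᶜ).Adj a b := hab
  have hbc' : ((cycleSquare (3*m+1)).induce Tᶜ).Adj b cc := hbc
  have hca' : ((cycleSquare (3*m+1)).induce Tᶜ).Adj cc a := hca
  let w : ((cycleSquare (3*m+1)).induce Tᶜ).Walk a a :=
    .cons hab' (.cons hbc' (.cons hca' .nil))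
  have hw : w.IsCycle := by
    rw [Walk.isCycle_def, Walk.isTrail_def]
    refine ⟨?_, by simp [w], ?_⟩ <;>
      simp [w, a, b, cc, Sym2.eq_iff, Subtype.ext_iff] <;>
      tauto
  exact hT w hw

/-- The counting lower bound. -/
private lemma lower_bound' (m : ℕ) (hm : 1 ≤ m) (T : Set (ZMod (3*m+1)))
    (hwin : ∀ i : ZMod (3*m+1), i ∈ T ∨ i + 1 ∈ T ∨ i + 2 ∈ T) :
    m + 1 ≤ T.ncard := by
  classical
  haveI : NeZero (3*m+1) := ⟨by omega⟩
  have hTfin : T.Finite := Set.toFinite T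
  set Tf := hTfin.toFinset with hTf
  let g : ZMod (3*m+1) → ZMod (3*m+1) := fun i =>
    if i ∈ T then i else if i + 1 ∈ T then i + 1 else i + 2
  have hg_mem : ∀ i, g i ∈ Tf := by
    intro i
    simp only [g, hTf, Set.Finite.mem_toFinset]
    rcases hwin i with h | h | h
    · rwa [if_pos h]
    · by_cases h0 : i ∈ T
      · rwa [if_pos h0]
      · rw [if_neg h0, if_pos h]; exact h
    · by_cases h0 : i ∈ T
      · rwa [if_pos h0]
      · rw [if_neg h0]
        by_cases h1 : i + 1 ∈ T
        · rw [if_pos h1]; exact h1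
        · rwa [if_neg h1]
  have hfib : ∀ s ∈ Tf, (Finset.univ.filter (fun i => g i = s)).card ≤ 3 := by
    intro s _
    have hsub : Finset.univ.filter (fun i => g i = s) ⊆ {s, s - 1, s - 2} := by
      intro i hi
      rw [Finset.mem_filter] at hi
      have : g i = i ∨ g i = i + 1 ∨ g i = i + 2 := by
        simp only [g]
        split_ifs <;> tauto
      rcases this with h | h | h <;> rw [hi.2] at h <;>
        simp only [Finset.mem_insert, Finset.mem_singleton]
      · left; exact h.symm
      · right; left; linear_combination -h
      · right; right; linear_combination -h
    calc (Finset.univ.filter (fun i => g i = s)).card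
        ≤ ({s, s - 1, s - 2} : Finset _).card := Finset.card_le_card hsub
      _ ≤ 3 := by
          apply le_trans (Finset.card_insert_le _ _)
          have := Finset.card_insert_le (s-1) ({s-2} : Finset (ZMod (3*m+1)))
          simp at this ⊢
          omega
  have hcount := Finset.card_le_mul_card_image_of_maps_to
    (fun a _ => hg_mem a) 3 hfib
  rw [Finset.card_univ, ZMod.card] at hcount
  have : T.ncard = Tf.card := Set.ncard_eq_toFinset_card T hTfin
  omega

/-- The explicit decycling set: all vertices whose value is divisible by 3. -/
private lemma upper_bound' (m : ℕ) (hm : 1 ≤ m) :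
    ∃ S : Set (ZMod (3*m+1)),
      ((cycleSquare (3*m+1)).induce Sᶜ).IsAcyclic ∧ S.ncard = m + 1 := by
  classical
  haveI : NeZero (3*m+1) := ⟨by omega⟩
  refine ⟨{x | x.val % 3 = 0}, ?_, ?_⟩
  · set S : Set (ZMod (3*m+1)) := {x | x.val % 3 = 0} with hS
    have hmem : ∀ x : ↥Sᶜ, (x : ZMod (3*m+1)).val % 3 ≠ 0 := fun x => x.2
    have hval : ∀ (x y : ZMod (3*m+1)) (c : ℕ), 0 < c → c < 3*m+1 →
        x - y = (c : ZMod (3*m+1)) →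
        x.val = y.val + c ∨ x.val + (3*m+1) = y.val + c := by
      intro x y c hc1 hc2 hxy
      have hx : x = y + (c : ZMod (3*m+1)) := by
        rw [← hxy]; ring
      have hv : x.val = (y.val + ((c : ZMod (3*m+1))).val) % (3*m+1) := by
        rw [hx, ZMod.val_add]
      rw [ZMod.val_cast_of_lt hc2] at hv
      have hy := ZMod.val_lt y
      rcases Nat.lt_or_ge (y.val + c) (3*m+1) with h | h
      · left; rw [Nat.mod_eq_of_lt h] at hv; omega
      · right
        rw [Nat.mod_eq_sub_mod h, Nat.mod_eq_of_lt (by omega)] at hv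
        omega
    apply acyclic_of_height' (f := fun x : ↥Sᶜ =>
      (x : ZMod (3*m+1)).val - (x : ZMod (3*m+1)).val / 3 - 1)
    · intro a b hfab
      have hfab' : (a : ZMod (3*m+1)).val - (a : ZMod (3*m+1)).val / 3 - 1 =
          (b : ZMod (3*m+1)).val - (b : ZMod (3*m+1)).val / 3 - 1 := hfab
      have ha := hmem a
      have hb := hmem b
      have : (a : ZMod (3*m+1)).val = (b : ZMod (3*m+1)).val := by omega
      exact Subtype.ext (ZMod.val_injective _ this)
    · intro a b hab
      have hab' : (cycleSquare (3*m+1)).Adj ↑a ↑b := hab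
      obtain ⟨hne, hd⟩ := hab'
      have ha := hmem a
      have hb := hmem b
      have hav := ZMod.val_lt (a : ZMod (3*m+1))
      have hbv := ZMod.val_lt (b : ZMod (3*m+1))
      have h1 : ((1:ℕ) : ZMod (3*m+1)) = 1 := by norm_num
      have h2 : ((2:ℕ) : ZMod (3*m+1)) = 2 := by norm_num
      rcases hd with h | h | h | h
      · rcases hval _ _ 1 one_pos (by omega) (by rw [h1]; exact h) with h' | h' <;> omega
      · rcases hval _ _ 1 one_pos (by omega) (by rw [h1]; exact h) with h' | h' <;> omega
      · rcases hval _ _ 2 two_pos (by omega) (by rw [h2]; exact h) with h' | h' <;> omega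
      · rcases hval _ _ 2 two_pos (by omega) (by rw [h2]; exact h) with h' | h' <;> omega
  · have hset : {x : ZMod (3*m+1) | x.val % 3 = 0} =
        ↑((Finset.range (m+1)).image (fun k : ℕ => ((3*k : ℕ) : ZMod (3*m+1)))) := by
      ext x
      simp only [Set.mem_setOf_eq, Finset.coe_image, Set.mem_image, Finset.mem_coe,
        Finset.mem_range]
      constructor
      · intro hx
        have hlt := ZMod.val_lt x
        refine ⟨x.val / 3, by omega, ?_⟩
        have h3 : 3 * (x.val / 3) = x.val := by omega
        rw [h3]
        have := ZMod.natCast_val (R := ZMod (3*m+1)) x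
        rwa [ZMod.cast_id] at this
      · rintro ⟨k, hk, rfl⟩
        rw [ZMod.val_cast_of_lt (by omega)]
        omega
    rw [hset, Set.ncard_coe_finset]
    rw [Finset.card_image_of_injOn, Finset.card_range]
    intro k hk l hl hkl
    simp only [Finset.coe_range, Set.mem_Iio] at hk hl
    have := congrArg ZMod.val hkl
    rw [ZMod.val_cast_of_lt (by omega), ZMod.val_cast_of_lt (by omega)] at this
    omega

/-- For every `n ≥ 4` with `n ≡ 1 (mod 3)`, `∇(Cₙ²) = (n−1)/3 + 1 = ⌈(n+1)/3⌉`. -/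
theorem decyclingNumber_cycleSquare_one_mod_three (n : ℕ) (hn : 4 ≤ n) (h3 : n % 3 = 1) :
    (cycleSquare n).decyclingNumber = (n - 1) / 3 + 1 ∧
      (n - 1) / 3 + 1 = ⌈((n : ℚ) + 1) / 3⌉₊ := by
  obtain ⟨m, rfl⟩ : ∃ m, n = 3 * m + 1 := ⟨n / 3, by omega⟩
  have hm : 1 ≤ m := by omega
  have hdiv : (3 * m + 1 - 1) / 3 + 1 = m + 1 := by omega
  constructor
  · rw [hdiv]
    obtain ⟨S, hSac, hScard⟩ := upper_bound' m hm
    have hmem : m + 1 ∈ {k | ∃ S : Set (ZMod (3*m+1)),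
        (cycleSquare (3*m+1)).IsDecyclingSet S ∧ S.ncard = k} := ⟨S, hSac, hScard⟩
    have hlb : ∀ k ∈ {k | ∃ S : Set (ZMod (3*m+1)),
        (cycleSquare (3*m+1)).IsDecyclingSet S ∧ S.ncard = k}, m + 1 ≤ k := by
      rintro k ⟨T, hT, rfl⟩
      exact lower_bound' m hm T (window_hit' m hm T hT)
    have hsmem := Nat.sInf_mem (⟨m + 1, hmem⟩ : Set.Nonempty _)
    exact le_antisymm (Nat.sInf_le hmem) (hlb _ hsmem)
  · rw [hdiv, eq_comm, Nat.ceil_eq_iff (by omega)]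
    constructor
    · push_cast
      rw [lt_div_iff₀ (by norm_num)]
      ring_nf
      push_cast
      linarith
    · push_cast
      rw [div_le_iff₀ (by norm_num)]
      push_cast
      linarith
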